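/- Let $M^* = \begin{pmatrix} A & b \\ b^T & \lambda \end{pmatrix}$ be a real symmetric matrix with $A$ of size $n-2$, $b \in \mathbb{R}^{n-2}$, and $\lambda \in \mathbb{R}$. Then the matrix $M = \begin{pmatrix} A & b/\sqrt{2} & b/\sqrt{2} \\ b^T/\sqrt{2} & 0 & \lambda \\ b^T/\sqrt{2} & \lambda & 0 \end{pmatrix}$ has characteristic polynomial equal to $(x + \lambda)$ times the characteristic polynomial of $M^*$. -/

import Mathlib

open Polynomial Matrix

lemma charpoly_conj_aux {n : Type*} [Fintype n] [DecidableEq n]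
    (P Q M : Matrix n n ℝ) (h1 : P * Q = 1) :
    (P * M * Q).charpoly = M.charpoly := by
  have hPQ : P.map (C : ℝ → ℝ[X]) * Q.map C = 1 := by
    rw [← Matrix.map_mul, h1, Matrix.map_one _ (map_zero C) (map_one C)]
  have hscalar : (Matrix.scalar n (X : ℝ[X])) = (X : ℝ[X]) • (1 : Matrix n n ℝ[X]) := by
    ext i j
    by_cases h : i = j <;> simp [Matrix.scalar_apply, Matrix.one_apply, diagonal, h]
  have key : charmatrix (P * M * Q) = P.map C * charmatrix M * Q.map C := by
    simp only [charmatrix, mul_sub, sub_mul, RingHom.mapMatrix_apply, hscalar]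
    congr 1
    · rw [mul_smul_comm, smul_mul_assoc, mul_one, hPQ]
    · simp [← Matrix.map_mul, Matrix.mul_assoc]
  rw [Matrix.charpoly, key, det_mul, det_mul, Matrix.charpoly]
  have : (P.map (C : ℝ → ℝ[X])).det * (Q.map C).det = 1 := by
    rw [← det_mul, hPQ, det_one]
  calc (P.map ⇑C).det * (charmatrix M).det * (Q.map ⇑C).det
      = (P.map (C : ℝ → ℝ[X])).det * (Q.map C).det * (charmatrix M).det := by ring
    _ = (charmatrix M).det := by rw [this, one_mul]

theorem charpoly_true_twin_off_diag_lambda (m : ℕ)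
    (A : Matrix (Fin m) (Fin m) ℝ) (hA : A.IsSymm) (b : Fin m → ℝ) (l : ℝ) :
    (Matrix.fromBlocks A
        (Matrix.of fun i (_ : Fin 2) => b i / Real.sqrt 2)
        (Matrix.of fun (_ : Fin 2) j => b j / Real.sqrt 2)
        (Matrix.of fun (k k' : Fin 2) => if k = k' then (0 : ℝ) else l)).charpoly =
      (X + C l) * (Matrix.fromBlocks A
        (Matrix.of fun i (_ : Fin 1) => b i)
        (Matrix.of fun (_ : Fin 1) j => b j)
        (Matrix.of fun (_ : Fin 1) (_ : Fin 1) => l)).charpoly := by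
  have h2 : Real.sqrt 2 * Real.sqrt 2 = 2 := Real.mul_self_sqrt (by norm_num)
  have hne : Real.sqrt 2 ≠ 0 := by positivity
  set Q : Matrix (Fin 2) (Fin 2) ℝ :=
    Matrix.of (fun k k' : Fin 2 => if k = 1 ∧ k' = 1 then -(1/Real.sqrt 2) else 1/Real.sqrt 2)
    with hQ
  set P : Matrix (Fin m ⊕ Fin 2) (Fin m ⊕ Fin 2) ℝ := Matrix.fromBlocks 1 0 0 Q with hP
  set C' : Matrix (Fin m) (Fin 2) ℝ := Matrix.of (fun i k => if k = 0 then b i else 0) with hC'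
  set R' : Matrix (Fin 2) (Fin m) ℝ := Matrix.of (fun k j => if k = 0 then b j else 0) with hR'
  set D' : Matrix (Fin 2) (Fin 2) ℝ :=
    Matrix.of (fun k k' : Fin 2 => if k = k' then (if k = 0 then l else -l) else 0) with hD'
  set N : Matrix (Fin m ⊕ Fin 2) (Fin m ⊕ Fin 2) ℝ := Matrix.fromBlocks A C' R' D' with hN
  have hQQ : Q * Q = 1 := by
    ext k k'
    fin_cases k <;> fin_cases k' <;>
      simp [hQ, Matrix.mul_apply, Fin.sum_univ_two, Matrix.one_apply] <;>
      field_simp <;> norm_num [sq, h2]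
  have hPP : P * P = 1 := by
    rw [hP, Matrix.fromBlocks_multiply]
    simp [hQQ, ← Matrix.fromBlocks_one]
  have hM : Matrix.fromBlocks A
        (Matrix.of fun i (_ : Fin 2) => b i / Real.sqrt 2)
        (Matrix.of fun (_ : Fin 2) j => b j / Real.sqrt 2)
        (Matrix.of fun (k k' : Fin 2) => if k = k' then (0 : ℝ) else l) = P * N * P := by
    rw [hP, hN, Matrix.fromBlocks_multiply, Matrix.fromBlocks_multiply, Matrix.fromBlocks_inj]
    refine ⟨by simp, ?_, ?_, ?_⟩
    · ext i k
      fin_cases k <;>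
        simp [hQ, hC', Matrix.mul_apply, Fin.sum_univ_two] <;> field_simp
    · ext k j
      fin_cases k <;>
        simp [hQ, hR', Matrix.mul_apply, Fin.sum_univ_two] <;> field_simp
    · ext k k'
      fin_cases k <;> fin_cases k' <;>
        simp [hQ, hD', Matrix.mul_apply, Fin.sum_univ_two] <;> field_simp <;> linear_combination l * h2
  rw [hM, charpoly_conj_aux P P N hPP]
  -- now compute charpoly N
  let e : (Fin m ⊕ Fin 2) ≃ ((Fin m ⊕ Fin 1) ⊕ Fin 1) :=
    (Equiv.sumCongr (Equiv.refl (Fin m)) finSumFinEquiv.symm).trans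
      (Equiv.sumAssoc (Fin m) (Fin 1) (Fin 1)).symm
  have hre : Matrix.reindex e e N = Matrix.fromBlocks
      (Matrix.fromBlocks A
        (Matrix.of fun i (_ : Fin 1) => b i)
        (Matrix.of fun (_ : Fin 1) j => b j)
        (Matrix.of fun (_ : Fin 1) (_ : Fin 1) => l)) 0 0
      (Matrix.of fun (_ : Fin 1) (_ : Fin 1) => -l) := by
    ext x y
    rcases x with (i | i) | i <;> rcases y with (j | j) | j <;>
      simp [e, hN, hC', hR', hD', Matrix.reindex_apply, Matrix.submatrix_apply,
        Equiv.sumAssoc, finSumFinEquiv, Fin.fin_one_eq_zero, Fin.val_eq_zero]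
  have : N.charpoly = (Matrix.reindex e e N).charpoly := (Matrix.charpoly_reindex e N).symm
  rw [this, hre, Matrix.charpoly_fromBlocks_zero₂₁]
  have h1x1 : (Matrix.of fun (_ : Fin 1) (_ : Fin 1) => -l).charpoly = X + C l := by
    rw [Matrix.charpoly, Matrix.det_fin_one]
    simp [charmatrix_apply_eq, sub_neg_eq_add]
  rw [h1x1, mul_comm]
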